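/- arXiv:1312.1469 — 3 statements merged into one kernel-verified Lean document; each statement's English description precedes it below -/
import Mathlib

section
/- Projection Lemma: Let ℋ be a finite-dimensional complex inner product space, let S ⊆ ℋ be a nontrivial linear subspace with orthogonal complement S⊥, and let H₁, H₂ be self-adjoint linear operators on ℋ. Assume that H₂ v = 0 for every v ∈ S, and that ⟨v, H₂ v⟩ ≥ J·‖v‖² for every v ∈ S⊥, where J is a real number with J > 2‖H₁‖ (operator norm). Let λ(A) denote the smallest eigenvalue of a self-adjoint operator A, and let H₁|_S denote the compression of H₁ to S (i.e., the operator v ↦ P_S H₁ v on S, where P_S is the orthogonal projection onto S). Then λ(H₁|_S) − ‖H₁‖²/(J − 2‖H₁‖) ≤ λ(H₁ + H₂) ≤ λ(H₁|_S). -/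
open scoped InnerProductSpace

/-- The smallest eigenvalue of an operator `A`. -/
noncomputable def smallestEig {H : Type*} [NormedAddCommGroup H]
    [InnerProductSpace ℂ H] (A : H →L[ℂ] H) : ℝ :=
  sInf {μ : ℝ | ∃ v : H, v ≠ 0 ∧ A v = (μ : ℂ) • v}

/-- The compression `H₁|_S` of an operator to a subspace `S`: `v ↦ P_S (H₁ v)` for `v ∈ S`,
where `P_S` is the orthogonal projection onto `S`. -/
noncomputable def compress {H : Type*} [NormedAddCommGroup H] [InnerProductSpace ℂ H]
    [FiniteDimensional ℂ H] (S : Submodule ℂ H) (A : H →L[ℂ] H) : S →L[ℂ] S :=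
  (S.orthogonalProjectionOnto).comp (A.comp S.subtypeL)

section helpers

variable {E : Type*} [NormedAddCommGroup E] [InnerProductSpace ℂ E]

lemma re_symm (x y : E) : (⟪x, y⟫_ℂ).re = (⟪y, x⟫_ℂ).re := by
  rw [← inner_conj_symm]; exact Complex.conj_re _

lemma re_inner_apply_le (A : E →L[ℂ] E) (x y : E) :
    |(⟪x, A y⟫_ℂ).re| ≤ ‖A‖ * (‖x‖ * ‖y‖) := by
  have h1 : ‖⟪x, A y⟫_ℂ‖ ≤ ‖x‖ * ‖A y‖ := norm_inner_le_norm x (A y)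
  have h2 : ‖A y‖ ≤ ‖A‖ * ‖y‖ := A.le_opNorm y
  have h3 : |(⟪x, A y⟫_ℂ).re| ≤ ‖⟪x, A y⟫_ℂ‖ := Complex.abs_re_le_norm _
  nlinarith [norm_nonneg x, norm_nonneg (A y), norm_nonneg y, norm_nonneg A]

lemma eig_re_inner {A : E →L[ℂ] E} {μ : ℝ} {v : E} (hv : A v = (μ : ℂ) • v) :
    (⟪v, A v⟫_ℂ).re = μ * ‖v‖ ^ 2 := by
  have h1 : (⟪v, v⟫_ℂ).re = ‖v‖ ^ 2 := by simpa using inner_self_eq_norm_sq (𝕜 := ℂ) v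
  have h2 : (⟪v, v⟫_ℂ).im = 0 := inner_self_im (𝕜 := ℂ) v
  rw [hv, inner_smul_right]
  simp [Complex.mul_re, h1, h2]
  left; rw [← Complex.ofReal_pow, Complex.ofReal_re]

lemma smallestEig_spec [FiniteDimensional ℂ E] [Nontrivial E] (A : E →L[ℂ] E)
    (hA : IsSelfAdjoint A) :
    (∃ v : E, v ≠ 0 ∧ A v = ((smallestEig A : ℝ) : ℂ) • v) ∧
      ∀ w : E, smallestEig A * ‖w‖ ^ 2 ≤ (⟪w, A w⟫_ℂ).re := by
  have hsym : (A : E →ₗ[ℂ] E).IsSymmetric := hA.isSymmetric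
  set μ : ℝ := ⨅ x : { x : E // x ≠ 0 },
      RCLike.re ⟪(A : E →ₗ[ℂ] E) (x : E), (x : E)⟫_ℂ / ‖(x : E)‖ ^ 2 with hμdef
  have hEig := hsym.hasEigenvalue_iInf_of_finiteDimensional
  obtain ⟨v, hv⟩ := hEig.exists_hasEigenvector
  have hveq : A v = ((μ : ℝ) : ℂ) • v := hv.apply_eq_smul
  have hv0 : v ≠ 0 := hv.right
  have key : ∀ w : E, w ≠ 0 →
      RCLike.re ⟪(A : E →ₗ[ℂ] E) w, w⟫_ℂ / ‖w‖ ^ 2 * ‖w‖ ^ 2 = (⟪w, A w⟫_ℂ).re := by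
    intro w hw
    have hx : (0 : ℝ) < ‖w‖ ^ 2 := pow_pos (norm_pos_iff.mpr hw) 2
    have h3 : RCLike.re ⟪(A : E →ₗ[ℂ] E) w, w⟫_ℂ = (⟪w, A w⟫_ℂ).re := re_symm (A w) w
    rw [h3, div_mul_cancel₀]
    exact ne_of_gt hx
  have hbdd : BddBelow (Set.range fun x : { x : E // x ≠ 0 } =>
      RCLike.re ⟪(A : E →ₗ[ℂ] E) (x : E), (x : E)⟫_ℂ / ‖(x : E)‖ ^ 2) := by
    refine ⟨-‖A‖, ?_⟩
    rintro r ⟨x, rfl⟩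
    have hx : (0 : ℝ) < ‖(x : E)‖ ^ 2 := pow_pos (norm_pos_iff.mpr x.2) 2
    rw [le_div_iff₀ hx]
    have h2 : |(⟪(x : E), A (x : E)⟫_ℂ).re| ≤ ‖A‖ * (‖(x : E)‖ * ‖(x : E)‖) :=
      re_inner_apply_le A (x : E) (x : E)
    have h3 : RCLike.re ⟪(A : E →ₗ[ℂ] E) (x : E), (x : E)⟫_ℂ = (⟪(x : E), A (x : E)⟫_ℂ).re :=
      re_symm (A (x : E)) (x : E)
    rw [h3]
    nlinarith [abs_le.mp h2]
  have hlow : ∀ w : E, μ * ‖w‖ ^ 2 ≤ (⟪w, A w⟫_ℂ).re := by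
    intro w
    rcases eq_or_ne w 0 with rfl | hw
    · simp
    · have h := ciInf_le hbdd ⟨w, hw⟩
      have hx : (0 : ℝ) < ‖w‖ ^ 2 := pow_pos (norm_pos_iff.mpr hw) 2
      calc μ * ‖w‖ ^ 2 ≤ RCLike.re ⟪(A : E →ₗ[ℂ] E) w, w⟫_ℂ / ‖w‖ ^ 2 * ‖w‖ ^ 2 := by
            exact mul_le_mul_of_nonneg_right h (le_of_lt hx)
        _ = (⟪w, A w⟫_ℂ).re := key w hw
  have hsE : smallestEig A = μ := by
    apply IsLeast.csInf_eq
    constructor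
    · exact ⟨v, hv0, hveq⟩
    · rintro r ⟨u, hu0, hueq⟩
      have h1 : (⟪u, A u⟫_ℂ).re = r * ‖u‖ ^ 2 := eig_re_inner hueq
      have h2 := hlow u
      have hx : (0 : ℝ) < ‖u‖ ^ 2 := pow_pos (norm_pos_iff.mpr hu0) 2
      nlinarith
  rw [hsE]
  exact ⟨⟨v, hv0, hveq⟩, hlow⟩

end helpers

lemma quad_bound {lam nu hn J a b : ℝ} (hh0 : 0 ≤ hn) (hc : 0 < J - 2*hn)
    (hlamh : lam ≤ hn) (hnorm : a^2 + b^2 = 1) (ha0 : 0 ≤ a) (hb0 : 0 ≤ b)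
    (hmain : lam * a^2 - 2*(hn*(a*b)) - hn*(b*b) + J*b^2 ≤ nu) :
    lam - hn^2/(J - 2*hn) ≤ nu := by
  have ha1 : a ≤ 1 := by nlinarith
  have ha2 : a^2 = 1 - b^2 := by linarith
  rw [ha2] at hmain
  rw [sub_le_iff_le_add, ← sub_le_iff_le_add', le_div_iff₀ hc]
  have k1 : 0 ≤ (nu - (lam * (1 - b^2) - 2*(hn*(a*b)) - hn*(b*b) + J*b^2)) * (J-2*hn) :=
    mul_nonneg (by linarith) hc.le
  have k2 : 0 ≤ (hn - lam) * (b^2*(J-2*hn)) :=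
    mul_nonneg (by linarith) (mul_nonneg (sq_nonneg b) hc.le)
  have k3 : 0 ≤ (1 - a) * (2*hn*b*(J-2*hn)) :=
    mul_nonneg (by linarith)
      (mul_nonneg (mul_nonneg (by linarith : (0:ℝ) ≤ 2*hn) hb0) hc.le)
  have k4 : 0 ≤ ((J-2*hn)*b - hn)^2 := sq_nonneg _
  nlinarith [k1, k2, k3, k4]

/-- **Projection Lemma** (Kempe–Kitaev–Regev). -/
theorem projection_lemma {H : Type*} [NormedAddCommGroup H] [InnerProductSpace ℂ H]
    [FiniteDimensional ℂ H]
    (S : Submodule ℂ H) (hS : S ≠ ⊥)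
    (H1 H2 : H →L[ℂ] H) (h1 : IsSelfAdjoint H1) (h2 : IsSelfAdjoint H2)
    (hker : ∀ v ∈ S, H2 v = 0)
    (J : ℝ) (hJ : 2 * ‖H1‖ < J)
    (hgap : ∀ v ∈ Sᗮ, J * ‖v‖ ^ 2 ≤ (⟪v, H2 v⟫_ℂ).re) :
    smallestEig (compress S H1) - ‖H1‖ ^ 2 / (J - 2 * ‖H1‖) ≤ smallestEig (H1 + H2) ∧
      smallestEig (H1 + H2) ≤ smallestEig (compress S H1) := by
  haveI : Nontrivial S := Submodule.nontrivial_iff_ne_bot.mpr hS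
  obtain ⟨x0, hx0S, hx0⟩ := (Submodule.ne_bot_iff S).mp hS
  haveI : Nontrivial H := ⟨⟨x0, 0, hx0⟩⟩
  have hh0 : (0 : ℝ) ≤ ‖H1‖ := norm_nonneg _
  have hc : (0 : ℝ) < J - 2 * ‖H1‖ := by linarith
  -- the compression is self-adjoint
  have hCsa : IsSelfAdjoint (compress S H1) := by
    rw [ContinuousLinearMap.isSelfAdjoint_iff_isSymmetric]
    intro x y
    show (⟪compress S H1 x, y⟫_ℂ) = ⟪x, compress S H1 y⟫_ℂ
    rw [show compress S H1 x = S.orthogonalProjectionOnto (H1 (x : H)) from rfl,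
      show compress S H1 y = S.orthogonalProjectionOnto (H1 (y : H)) from rfl,
      Submodule.inner_orthogonalProjectionOnto_eq_of_mem_right, Submodule.inner_orthogonalProjectionOnto_eq_of_mem_left]
    exact h1.isSymmetric (x : H) (y : H)
  have hinner_compress : ∀ x : S, (⟪(x : H), H1 (x : H)⟫_ℂ) = ⟪x, compress S H1 x⟫_ℂ := by
    intro x
    rw [show compress S H1 x = S.orthogonalProjectionOnto (H1 (x : H)) from rfl,
      Submodule.inner_orthogonalProjectionOnto_eq_of_mem_left]
  obtain ⟨⟨s0, hs00, hs0eig⟩, hlowC⟩ := smallestEig_spec (compress S H1) hCsa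
  obtain ⟨⟨v, hv0, hveig⟩, hlowA⟩ := smallestEig_spec (H1 + H2) (h1.add h2)
  set lam := smallestEig (compress S H1) with hlam
  set nu := smallestEig (H1 + H2) with hnu
  have hs0H : (s0 : H) ≠ 0 := fun hcontra => hs00 (Subtype.ext hcontra)
  have hs0n : (0 : ℝ) < ‖(s0 : H)‖ := norm_pos_iff.mpr hs0H
  have hnormS : ‖s0‖ = ‖(s0 : H)‖ := rfl
  -- the value of the compressed quadratic form at s0
  have hs0val : (⟪(s0 : H), H1 (s0 : H)⟫_ℂ).re = lam * ‖(s0 : H)‖ ^ 2 := by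
    rw [hinner_compress s0]
    rw [eig_re_inner hs0eig, hnormS]
  -- Upper bound
  have hupper : nu ≤ lam := by
    have h2s0 : H2 (s0 : H) = 0 := hker _ s0.2
    have happ : (H1 + H2) (s0 : H) = H1 (s0 : H) := by
      simp [ContinuousLinearMap.add_apply, h2s0]
    have := hlowA (s0 : H)
    rw [happ, hs0val] at this
    have hsq : (0 : ℝ) < ‖(s0 : H)‖ ^ 2 := by positivity
    exact le_of_mul_le_mul_right this hsq
  -- lam ≤ ‖H1‖
  have hlamh : lam ≤ ‖H1‖ := by
    have habs := (abs_le.mp (re_inner_apply_le H1 (s0 : H) (s0 : H))).2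
    rw [hs0val] at habs
    nlinarith [habs, hs0n, mul_pos hs0n hs0n]
  constructor
  · -- Lower bound
    set u : H := (‖v‖⁻¹ : ℂ) • v with hu
    have hvn : ‖v‖ ≠ 0 := norm_ne_zero_iff.mpr hv0
    have hun : ‖u‖ = 1 := by
      rw [hu, norm_smul]
      simp [hvn]
    have hueig : (H1 + H2) u = ((nu : ℝ) : ℂ) • u := by
      rw [hu, map_smul, hveig, smul_comm]
    have h_nu : (⟪u, (H1 + H2) u⟫_ℂ).re = nu := by
      rw [eig_re_inner hueig, hun]; ring
    set p : H := (S.orthogonalProjectionOnto u : H) with hp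
    set t : H := u - p with ht
    have hpS : p ∈ S := (S.orthogonalProjectionOnto u).2
    have htS : t ∈ Sᗮ := S.sub_starProjection_mem_orthogonal u
    have hu_eq : u = p + t := by rw [ht]; abel
    have hor : (⟪p, t⟫_ℂ) = 0 := Submodule.inner_right_of_mem_orthogonal hpS htS
    have hnormsum : ‖p‖ ^ 2 + ‖t‖ ^ 2 = 1 := by
      have hns := norm_add_sq (𝕜 := ℂ) p t
      rw [← hu_eq, hun] at hns
      rw [hor] at hns
      simp at hns
      linarith
    have hH2p : H2 p = 0 := hker p hpS
    have hexpand : (⟪u, (H1 + H2) u⟫_ℂ).re =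
        (⟪p, H1 p⟫_ℂ).re + 2 * (⟪p, H1 t⟫_ℂ).re + (⟪t, H1 t⟫_ℂ).re + (⟪t, H2 t⟫_ℂ).re := by
      have e : (H1 + H2) u = H1 p + H1 t + H2 t := by
        rw [hu_eq]
        simp [ContinuousLinearMap.add_apply, map_add, hH2p]
        abel
      have hpH2t : (⟪p, H2 t⟫_ℂ) = 0 := by
        have hsymm : (⟪H2 p, t⟫_ℂ) = ⟪p, H2 t⟫_ℂ := h2.isSymmetric p t
        rw [← hsymm, hH2p, inner_zero_left]
      have htH1p : (⟪t, H1 p⟫_ℂ).re = (⟪p, H1 t⟫_ℂ).re := by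
        have hsymm : (⟪H1 t, p⟫_ℂ) = ⟪t, H1 p⟫_ℂ := h1.isSymmetric t p
        rw [← hsymm]
        exact re_symm _ _
      rw [e, hu_eq]
      simp only [inner_add_left, inner_add_right, hpH2t, Complex.add_re, Complex.zero_re]
      rw [htH1p]
      ring
    have b1 : lam * ‖p‖ ^ 2 ≤ (⟪p, H1 p⟫_ℂ).re := by
      have hl := hlowC ⟨p, hpS⟩
      have hie : (⟪p, H1 p⟫_ℂ) = ⟪(⟨p, hpS⟩ : S), compress S H1 ⟨p, hpS⟩⟫_ℂ :=
        hinner_compress ⟨p, hpS⟩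
      rw [← hie] at hl
      exact hl
    have b2 : -(‖H1‖ * (‖p‖ * ‖t‖)) ≤ (⟪p, H1 t⟫_ℂ).re :=
      (abs_le.mp (re_inner_apply_le H1 p t)).1
    have b3 : -(‖H1‖ * (‖t‖ * ‖t‖)) ≤ (⟪t, H1 t⟫_ℂ).re :=
      (abs_le.mp (re_inner_apply_le H1 t t)).1
    have b4 : J * ‖t‖ ^ 2 ≤ (⟪t, H2 t⟫_ℂ).re := hgap t htS
    have hmain : lam * ‖p‖ ^ 2 - 2 * (‖H1‖ * (‖p‖ * ‖t‖)) - ‖H1‖ * (‖t‖ * ‖t‖) + J * ‖t‖ ^ 2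
        ≤ nu := by
      rw [← h_nu, hexpand]
      linarith
    exact quad_bound hh0 hc hlamh hnormsum (norm_nonneg p) (norm_nonneg t) hmain
  · exact hupper
end

section
/- The history state is annihilated by the propagation Hamiltonian: H_prop (Σ_{t=0}^{K} γ_t) = 0. Equivalently, the history state η := (1/√(K+1)) Σ_{t=0}^{K} γ_t is a zero-eigenvalue eigenvector of H_prop whenever φ ≠ 0. -/
open Matrix Complex
open scoped Kronecker Matrix

/-- The product `U_t ⋯ U_2 U_1` (with `U i` for `i : Fin K` standing for `U_{i+1}`). -/
noncomputable def prodU (d K : ℕ) (U : Fin K → Matrix (Fin d) (Fin d) ℂ) :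
    ℕ → Matrix (Fin d) (Fin d) ℂ
  | 0 => 1
  | t + 1 => (if h : t < K then U ⟨t, h⟩ else 1) * prodU d K U t

/-- The state `γ_t := (U_t ⋯ U₁ φ) ⊗ e_t` on `ℂ^d ⊗ ℂ^{K+1}`. -/
noncomputable def gammaVec (d K : ℕ) (U : Fin K → Matrix (Fin d) (Fin d) ℂ)
    (φ : Fin d → ℂ) (t : Fin (K + 1)) : Fin d × Fin (K + 1) → ℂ :=
  fun p => (prodU d K U t.val *ᵥ φ) p.1 * (if p.2 = t then 1 else 0)

/-- The clock matrix `e_a e_b†` on `ℂ^{K+1}`. -/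
noncomputable def clockE (K : ℕ) (a b : Fin (K + 1)) :
    Matrix (Fin (K + 1)) (Fin (K + 1)) ℂ :=
  Matrix.single a b 1

/-- The propagation term
`H_t := I ⊗ (e_t e_t† + e_{t+1} e_{t+1}†) − U_{t+1} ⊗ (e_{t+1} e_t†) − U_{t+1}† ⊗ (e_t e_{t+1}†)`. -/
noncomputable def Hterm (d K : ℕ) (U : Fin K → Matrix (Fin d) (Fin d) ℂ) (t : Fin K) :
    Matrix (Fin d × Fin (K + 1)) (Fin d × Fin (K + 1)) ℂ :=
  (1 : Matrix (Fin d) (Fin d) ℂ) ⊗ₖ (clockE K t.castSucc t.castSucc + clockE K t.succ t.succ)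
    - (U t) ⊗ₖ (clockE K t.succ t.castSucc)
    - (U t)ᴴ ⊗ₖ (clockE K t.castSucc t.succ)

/-- The propagation Hamiltonian `H_prop := Σ_{t=0}^{K−1} H_t`. -/
noncomputable def Hprop (d K : ℕ) (U : Fin K → Matrix (Fin d) (Fin d) ℂ) :
    Matrix (Fin d × Fin (K + 1)) (Fin d × Fin (K + 1)) ℂ :=
  ∑ t : Fin K, Hterm d K U t

lemma sum_gamma (d K : ℕ) (U : Fin K → Matrix (Fin d) (Fin d) ℂ) (φ : Fin d → ℂ) :
    (∑ t : Fin (K + 1), gammaVec d K U φ t)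
      = fun p => (prodU d K U p.2.val *ᵥ φ) p.1 := by
  funext p
  simp [gammaVec, Finset.sum_apply, mul_ite, mul_one, mul_zero]

lemma kron_clock_mulVec (d K : ℕ) (A : Matrix (Fin d) (Fin d) ℂ) (a₀ b₀ : Fin (K + 1))
    (x : Fin d × Fin (K + 1) → ℂ) (i : Fin d) (a : Fin (K + 1)) :
    ((A ⊗ₖ clockE K a₀ b₀) *ᵥ x) (i, a)
      = if a₀ = a then (A *ᵥ fun j => x (j, b₀)) i else 0 := by
  simp only [mulVec, dotProduct, Fintype.sum_prod_type, kroneckerMap_apply, clockE,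
    single, of_apply]
  simp [ite_and, mul_ite, mul_zero, mul_one, Finset.sum_ite_eq, Finset.mul_sum]

lemma Hterm_mulVec (d K : ℕ) (U : Fin K → Matrix (Fin d) (Fin d) ℂ)
    (hU : ∀ i, U i ∈ Matrix.unitaryGroup (Fin d) ℂ) (φ : Fin d → ℂ) (t : Fin K) :
    Hterm d K U t *ᵥ (fun p => (prodU d K U p.2.val *ᵥ φ) p.1) = 0 := by
  funext p
  obtain ⟨i, a⟩ := p
  have hUt : (U t)ᴴ * U t = 1 := by
    have := (hU t).1
    rwa [Matrix.star_eq_conjTranspose] at this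
  have hsucc : prodU d K U (t.val + 1) = U t * prodU d K U t.val := by
    rw [prodU, dif_pos t.isLt]
  simp only [Hterm, sub_mulVec, kronecker_add, add_mulVec, Pi.sub_apply, Pi.add_apply,
    Pi.zero_apply, kron_clock_mulVec]
  have e1 : ∀ b₀ : Fin (K+1),
      ((1 : Matrix (Fin d) (Fin d) ℂ) *ᵥ fun j => (prodU d K U b₀.val *ᵥ φ) j) i
        = (prodU d K U b₀.val *ᵥ φ) i := by
    intro b₀; rw [one_mulVec]
  have e2 : (U t *ᵥ fun j => (prodU d K U (t.castSucc).val *ᵥ φ) j) i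
      = (prodU d K U (t.succ).val *ᵥ φ) i := by
    have : (fun j => (prodU d K U (t.castSucc).val *ᵥ φ) j) = prodU d K U t.val *ᵥ φ := by
      rfl
    rw [this, mulVec_mulVec, ← hsucc]
    simp [Fin.val_succ]
  have e3 : ((U t)ᴴ *ᵥ fun j => (prodU d K U (t.succ).val *ᵥ φ) j) i
      = (prodU d K U (t.castSucc).val *ᵥ φ) i := by
    have : (fun j => (prodU d K U (t.succ).val *ᵥ φ) j) = prodU d K U (t.val + 1) *ᵥ φ := by
      rfl
    rw [this, hsucc, ← mulVec_mulVec]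
    rw [mulVec_mulVec, hUt, one_mulVec]
    simp [Fin.coe_castSucc]
  rw [e1, e1, e2, e3]
  split <;> split <;> ring

/-- The history state `Σ_{t=0}^{K} γ_t` is annihilated by `H_prop`; equivalently, the
normalized history state `η := (1/√(K+1)) Σ_t γ_t` is a zero-eigenvalue eigenvector of
`H_prop` whenever `φ ≠ 0`. -/
theorem Hprop_annihilates_history (d K : ℕ) (hd : 1 ≤ d) (hK : 1 ≤ K)
    (U : Fin K → Matrix (Fin d) (Fin d) ℂ)
    (hU : ∀ i, U i ∈ Matrix.unitaryGroup (Fin d) ℂ)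
    (φ : Fin d → ℂ) :
    Hprop d K U *ᵥ (∑ t : Fin (K + 1), gammaVec d K U φ t) = 0 ∧
      (φ ≠ 0 →
        (((Real.sqrt (K + 1) : ℂ))⁻¹ • ∑ t : Fin (K + 1), gammaVec d K U φ t) ≠ 0 ∧
        Hprop d K U *ᵥ
            (((Real.sqrt (K + 1) : ℂ))⁻¹ • ∑ t : Fin (K + 1), gammaVec d K U φ t)
          = (0 : ℂ) • (((Real.sqrt (K + 1) : ℂ))⁻¹ • ∑ t : Fin (K + 1), gammaVec d K U φ t)) := by
  have hS := sum_gamma d K U φ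
  have hmain : Hprop d K U *ᵥ (∑ t : Fin (K + 1), gammaVec d K U φ t) = 0 := by
    rw [hS, Hprop]
    funext p
    simp only [mulVec, dotProduct, Matrix.sum_apply, Finset.sum_mul, Pi.zero_apply]
    rw [Finset.sum_comm]
    refine Finset.sum_eq_zero fun t _ => ?_
    have := congrFun (Hterm_mulVec d K U hU φ t) p
    simpa [mulVec, dotProduct] using this
  refine ⟨hmain, fun hφ => ⟨?_, ?_⟩⟩
  · obtain ⟨i, hi⟩ := Function.ne_iff.mp hφ
    have hc : ((Real.sqrt (K + 1) : ℂ))⁻¹ ≠ 0 := by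
      have : Real.sqrt (K + 1) ≠ 0 := by positivity
      simpa using this
    intro h
    apply hi
    have := congrFun h (i, 0)
    rw [hS] at this
    simp only [Pi.smul_apply, smul_eq_mul, Pi.zero_apply] at this
    rcases mul_eq_zero.mp this with h' | h'
    · exact absurd h' hc
    · simpa [prodU, one_mulVec] using h'
  · rw [mulVec_smul, hmain, smul_zero, zero_smul]
end

section
/- Spectral gap above the history state: suppose ‖φ‖ = 1, and let v be any vector in the linear span of {γ₀, …, γ_K} that is orthogonal to the history state Σ_{t=0}^{K} γ_t. Then ⟨v, H_prop v⟩ ≥ (1 − cos(π/(K+1)))·‖v‖², and in particular ⟨v, H_prop v⟩ ≥ ‖v‖²/(2(K+1)²). -/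
open Matrix Complex
open scoped Kronecker Matrix

namespace HpropAux
open Finset Complex


noncomputable def zeta (m : ℕ) : ℂ := Complex.exp ((2 * Real.pi / m : ℝ) * Complex.I)

lemma zeta_pow (m k : ℕ) : zeta m ^ k = Complex.exp ((2 * Real.pi * k / m : ℝ) * Complex.I) := by
  rw [zeta, ← Complex.exp_nat_mul]
  congr 1
  push_cast
  ring

lemma zeta_pow_m (m : ℕ) (hm : 0 < m) : zeta m ^ m = 1 := by
  rw [zeta_pow]
  have hm0 : (m : ℝ) ≠ 0 := Nat.cast_ne_zero.mpr hm.ne'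
  have : (2 * Real.pi * m / m : ℝ) = 2 * Real.pi := by field_simp
  rw [this]
  have := Complex.exp_two_pi_mul_I
  rw [← this]
  congr 1
  push_cast
  ring

lemma zeta_pow_ne_one (m j : ℕ) (h0 : 0 < j) (hj : j < m) : zeta m ^ j ≠ 1 := by
  rw [zeta_pow]
  intro h
  rw [Complex.exp_eq_one_iff] at h
  obtain ⟨n, hn⟩ := h
  have hI : ((2 * Real.pi * j / m : ℝ) : ℂ) = ((n * (2 * Real.pi) : ℝ) : ℂ) := by
    apply mul_right_cancel₀ Complex.I_ne_zero
    rw [hn]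
    push_cast
    ring
  have hR : (2 * Real.pi * j / m : ℝ) = n * (2 * Real.pi) := Complex.ofReal_injective hI
  have hm0 : (0:ℝ) < m := by exact_mod_cast h0.trans hj
  have hpi := Real.pi_pos
  have hjR : (j : ℝ) = n * m := by
    field_simp at hR
    nlinarith [hR]
  have hjZ : (j : ℤ) = n * m := by exact_mod_cast hjR
  rcases le_or_gt n 0 with h1 | h1
  · have : (j:ℤ) ≤ 0 := by
      have : n * m ≤ 0 := mul_nonpos_of_nonpos_of_nonneg h1 (by positivity)
      omega
    omega
  · have : (m:ℤ) ≤ n * m := le_mul_of_one_le_left (by positivity) h1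
    omega

lemma sum_zeta_pow (m a : ℕ) (hm : 0 < m) :
    ∑ k ∈ range m, (zeta m ^ a) ^ k = if m ∣ a then (m : ℂ) else 0 := by
  split_ifs with h
  · obtain ⟨q, rfl⟩ := h
    rw [pow_mul, zeta_pow_m m hm, one_pow]
    simp
  · have h1 : a % m ≠ 0 := fun hc => h (Nat.dvd_of_mod_eq_zero hc)
    have h2 : a % m < m := Nat.mod_lt _ hm
    have hx1 : zeta m ^ a = zeta m ^ (a % m) := by
      conv_lhs => rw [← Nat.div_add_mod a m]
      rw [pow_add, pow_mul, zeta_pow_m m hm, one_pow, one_mul]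
    have hxne : zeta m ^ a ≠ 1 := by
      rw [hx1]; exact zeta_pow_ne_one m _ (Nat.pos_of_ne_zero h1) h2
    have hxm : (zeta m ^ a) ^ m = 1 := by
      rw [← pow_mul, mul_comm, pow_mul, zeta_pow_m m hm, one_pow]
    rw [geom_sum_eq hxne, hxm]
    simp

lemma conj_zeta_mul (m : ℕ) : (starRingEnd ℂ) (zeta m) * zeta m = 1 := by
  rw [mul_comm, Complex.mul_conj]
  rw [zeta]
  norm_cast
  rw [Complex.normSq_eq_norm_sq, Complex.norm_exp_ofReal_mul_I]
  norm_num

lemma conj_zeta_eq (m : ℕ) (hm : 0 < m) : (starRingEnd ℂ) (zeta m) = zeta m ^ (m - 1) := by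
  have h1 : zeta m ^ (m - 1) * zeta m = 1 := by
    rw [← pow_succ, Nat.sub_add_cancel hm, zeta_pow_m m hm]
  have h2 := conj_zeta_mul m
  have hz : zeta m ≠ 0 := by
    intro hc
    rw [hc] at h2
    simp at h2
  have e1 : zeta m ^ (m - 1) = (zeta m)⁻¹ := eq_inv_of_mul_eq_one_left h1
  have e2 : (starRingEnd ℂ) (zeta m) = (zeta m)⁻¹ := eq_inv_of_mul_eq_one_left h2
  rw [e1, e2]

lemma orth (m t s : ℕ) (hm : 0 < m) (ht : t < m) (hs : s < m) :
    ∑ k ∈ range m, zeta m ^ (k * t) * (starRingEnd ℂ) (zeta m ^ (k * s))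
      = if t = s then (m : ℂ) else 0 := by
  have key : ∀ k, zeta m ^ (k * t) * (starRingEnd ℂ) (zeta m ^ (k * s))
      = (zeta m ^ (t + (m - 1) * s)) ^ k := by
    intro k
    calc zeta m ^ (k * t) * (starRingEnd ℂ) (zeta m ^ (k * s))
        = zeta m ^ (k * t) * zeta m ^ ((m - 1) * (k * s)) := by
          rw [map_pow, conj_zeta_eq m hm, ← pow_mul]
      _ = zeta m ^ (k * t + (m - 1) * (k * s)) := (pow_add _ _ _).symm
      _ = (zeta m ^ (t + (m - 1) * s)) ^ k := by
          rw [← pow_mul]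
          congr 1
          ring
  rw [sum_congr rfl fun k _ => key k, sum_zeta_pow m _ hm]
  have hdvd : m ∣ t + (m - 1) * s ↔ t = s := by
    obtain ⟨m', rfl⟩ : ∃ m', m = m' + 1 := ⟨m - 1, by omega⟩
    simp only [Nat.add_sub_cancel]
    constructor
    · rintro ⟨q, hq⟩
      have hq' : (t : ℤ) + m' * s = (m' + 1) * q := by exact_mod_cast hq
      have hZ : (t : ℤ) - s = (m' + 1) * ((q : ℤ) - s) := by linear_combination hq'
      have htZ : (t : ℤ) < m' + 1 := by exact_mod_cast ht
      have hsZ : (s : ℤ) < m' + 1 := by exact_mod_cast hs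
      rcases lt_trichotomy ((q : ℤ) - s) 0 with h | h | h
      · have h4 : (t : ℤ) - s ≤ (m' + 1) * (-1) :=
          hZ.le.trans (mul_le_mul_of_nonneg_left (by omega) (by positivity))
        omega
      · rw [h, mul_zero] at hZ
        omega
      · have h4 : (m' + 1 : ℤ) * 1 ≤ (t : ℤ) - s := by
          rw [hZ]
          exact mul_le_mul_of_nonneg_left (by omega) (by positivity)
        omega
    · rintro rfl
      exact ⟨t, by ring⟩
  rw [if_congr hdvd rfl rfl]

noncomputable def dft (m : ℕ) (d : ℕ → ℂ) (k : ℕ) : ℂ :=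
  ∑ t ∈ range m, d t * zeta m ^ (k * t)

lemma parseval (m : ℕ) (hm : 0 < m) (d : ℕ → ℂ) :
    ∑ k ∈ range m, (Complex.normSq (dft m d k) : ℂ)
      = m * ∑ t ∈ range m, (Complex.normSq (d t) : ℂ) := by
  have expand : ∀ k, (Complex.normSq (dft m d k) : ℂ)
      = ∑ t ∈ range m, ∑ s ∈ range m,
          (d t * (starRingEnd ℂ) (d s)) * (zeta m ^ (k * t) * (starRingEnd ℂ) (zeta m ^ (k * s))) := by
    intro k
    rw [← Complex.mul_conj, dft, map_sum, sum_mul_sum]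
    refine sum_congr rfl fun t _ => sum_congr rfl fun s _ => ?_
    rw [_root_.map_mul]
    ring
  rw [sum_congr rfl fun k _ => expand k, sum_comm]
  have swap2 : ∀ t ∈ range m,
      (∑ k ∈ range m, ∑ s ∈ range m,
        (d t * (starRingEnd ℂ) (d s)) * (zeta m ^ (k * t) * (starRingEnd ℂ) (zeta m ^ (k * s))))
      = ∑ s ∈ range m, (d t * (starRingEnd ℂ) (d s))
          * ∑ k ∈ range m, zeta m ^ (k * t) * (starRingEnd ℂ) (zeta m ^ (k * s)) := by
    intro t _
    rw [sum_comm]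
    exact sum_congr rfl fun s _ => (mul_sum _ _ _).symm
  rw [sum_congr rfl swap2]
  have collapse : ∀ t ∈ range m,
      (∑ s ∈ range m, (d t * (starRingEnd ℂ) (d s))
          * ∑ k ∈ range m, zeta m ^ (k * t) * (starRingEnd ℂ) (zeta m ^ (k * s)))
      = (Complex.normSq (d t) : ℂ) * m := by
    intro t ht
    rw [sum_congr rfl fun s hs => by
      rw [orth m t s hm (mem_range.mp ht) (mem_range.mp hs)]]
    simp only [mul_ite, mul_zero]
    rw [sum_ite_eq (range m) t (fun s => d t * (starRingEnd ℂ) (d s) * m)]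
    simp only [if_pos ht]
    rw [Complex.mul_conj]
  rw [sum_congr rfl collapse, ← sum_mul, mul_comm]

lemma sum_shift (m : ℕ) (g : ℕ → ℂ) (h : g m = g 0) :
    ∑ t ∈ range m, g (t + 1) = ∑ t ∈ range m, g t := by
  have h1 := Finset.sum_range_succ' g m
  have h2 := Finset.sum_range_succ g m
  rw [h2, h] at h1
  exact (add_right_cancel h1.symm)

lemma dft_shift (m : ℕ) (hm : 0 < m) (d : ℕ → ℂ) (hper : d m = d 0) (k : ℕ) :
    dft m (fun t => d (t + 1) - d t) k = ((starRingEnd ℂ) (zeta m) ^ k - 1) * dft m d k := by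
  have hc : ((starRingEnd ℂ) (zeta m) * zeta m) ^ k = 1 := by rw [conj_zeta_mul]; exact one_pow k
  have step1 : ∀ t, d (t + 1) * zeta m ^ (k * t)
      = (starRingEnd ℂ) (zeta m) ^ k * (d (t + 1) * zeta m ^ (k * (t + 1))) := by
    intro t
    have : zeta m ^ (k * (t + 1)) = zeta m ^ k * zeta m ^ (k * t) := by
      rw [← pow_add]; congr 1; ring
    rw [this]
    have h2 : (starRingEnd ℂ) (zeta m) ^ k * zeta m ^ k = 1 := by rw [← mul_pow]; exact hc
    calc d (t + 1) * zeta m ^ (k * t)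
        = ((starRingEnd ℂ) (zeta m) ^ k * zeta m ^ k) * (d (t + 1) * zeta m ^ (k * t)) := by
          rw [h2, one_mul]
      _ = (starRingEnd ℂ) (zeta m) ^ k * (d (t + 1) * (zeta m ^ k * zeta m ^ (k * t))) := by ring
  have hshift : ∑ t ∈ range m, d (t + 1) * zeta m ^ (k * (t + 1))
      = ∑ t ∈ range m, d t * zeta m ^ (k * t) := by
    apply sum_shift m (fun t => d t * zeta m ^ (k * t))
    have : zeta m ^ (k * m) = 1 := by
      rw [mul_comm, pow_mul, zeta_pow_m m hm, one_pow]
    simp [hper, this]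
  calc dft m (fun t => d (t + 1) - d t) k
      = (∑ t ∈ range m, d (t + 1) * zeta m ^ (k * t)) - dft m d k := by
        rw [dft, dft, ← sum_sub_distrib]
        exact sum_congr rfl fun t _ => by ring
    _ = (starRingEnd ℂ) (zeta m) ^ k * (∑ t ∈ range m, d (t + 1) * zeta m ^ (k * (t + 1)))
          - dft m d k := by
        rw [sum_congr rfl fun t _ => step1 t, mul_sum]
    _ = ((starRingEnd ℂ) (zeta m) ^ k - 1) * dft m d k := by
        rw [hshift, dft]
        ring

lemma normSq_weight (m k : ℕ) :
    Complex.normSq ((starRingEnd ℂ) (zeta m) ^ k - 1) = 2 - 2 * Real.cos (2 * Real.pi * k / m) := by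
  have h1 : (starRingEnd ℂ) (zeta m) ^ k - 1 = (starRingEnd ℂ) (zeta m ^ k - 1) := by
    rw [map_sub, map_pow, _root_.map_one]
  rw [h1, Complex.normSq_conj, zeta_pow]
  rw [Complex.normSq_apply]
  rw [Complex.sub_re, Complex.sub_im, Complex.exp_ofReal_mul_I_re, Complex.exp_ofReal_mul_I_im]
  simp only [Complex.one_re, Complex.one_im]
  nlinarith [Real.sin_sq_add_cos_sq (2 * Real.pi * k / m)]

lemma cos_bound (m k : ℕ) (hm : 2 ≤ m) (hk : 1 ≤ k) (hk' : k < m) :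
    Real.cos (2 * Real.pi * k / m) ≤ Real.cos (2 * Real.pi / m) := by
  have hpi := Real.pi_pos
  have hmR : (0:ℝ) < m := by positivity
  rcases le_or_gt (2 * k) m with h | h
  · apply Real.cos_le_cos_of_nonneg_of_le_pi
    · positivity
    · rw [div_le_iff₀ hmR]
      have h2k : (2 * k : ℝ) ≤ m := by exact_mod_cast h
      nlinarith [mul_nonneg hpi.le (sub_nonneg.mpr h2k)]
    · rw [div_le_div_iff₀ hmR hmR]
      have h1k : (1:ℝ) ≤ k := by exact_mod_cast hk
      nlinarith [mul_nonneg (mul_nonneg hpi.le (sub_nonneg.mpr h1k)) hmR.le]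
  · have hEq : Real.cos (2 * Real.pi * k / m) = Real.cos (2 * Real.pi * ((m : ℝ) - k) / m) := by
      have : (2 * Real.pi * ((m : ℝ) - k) / m) = 2 * Real.pi - 2 * Real.pi * k / m := by
        field_simp
      rw [this, Real.cos_two_pi_sub]
    rw [hEq]
    have hkm : (k : ℝ) < m := by exact_mod_cast hk'
    have h2 : (2 * ((m:ℝ) - k)) ≤ m := by
      have : (m : ℝ) < 2 * k := by exact_mod_cast h
      linarith
    have hk1 : (k:ℝ) + 1 ≤ m := by exact_mod_cast hk'
    apply Real.cos_le_cos_of_nonneg_of_le_pi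
    · have : (0:ℝ) ≤ (m:ℝ) - k := by linarith
      positivity
    · rw [div_le_iff₀ hmR]
      nlinarith [mul_nonneg hpi.le (by linarith : (0:ℝ) ≤ (m:ℝ) - 2 * ((m:ℝ) - k))]
    · rw [div_le_div_iff₀ hmR hmR]
      nlinarith [mul_nonneg (mul_nonneg hpi.le (by linarith : (0:ℝ) ≤ ((m:ℝ) - k) - 1)) hmR.le]

lemma cyclic_gap (m : ℕ) (hm : 2 ≤ m) (d : ℕ → ℂ) (hper : d m = d 0)
    (hsum : ∑ t ∈ range m, d t = 0) :
    (2 - 2 * Real.cos (2 * Real.pi / m)) * ∑ t ∈ range m, Complex.normSq (d t)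
      ≤ ∑ t ∈ range m, Complex.normSq (d (t + 1) - d t) := by
  have hm0 : 0 < m := by omega
  have P1 : ∑ k ∈ range m, Complex.normSq (dft m d k)
      = m * ∑ t ∈ range m, Complex.normSq (d t) := by
    have := parseval m hm0 d
    exact_mod_cast this
  have P2 : ∑ k ∈ range m, Complex.normSq (dft m (fun t => d (t + 1) - d t) k)
      = m * ∑ t ∈ range m, Complex.normSq (d (t + 1) - d t) := by
    have := parseval m hm0 (fun t => d (t + 1) - d t)
    exact_mod_cast this
  have hF0 : dft m d 0 = 0 := by
    rw [dft]
    simp only [zero_mul, pow_zero, mul_one]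
    exact hsum
  have key : ∀ k ∈ range m,
      (2 - 2 * Real.cos (2 * Real.pi / m)) * Complex.normSq (dft m d k)
        ≤ Complex.normSq (dft m (fun t => d (t + 1) - d t) k) := by
    intro k hk
    rw [dft_shift m hm0 d hper k, Complex.normSq_mul, normSq_weight]
    rcases Nat.eq_zero_or_pos k with rfl | hkpos
    · simp [hF0]
    · apply mul_le_mul_of_nonneg_right _ (Complex.normSq_nonneg _)
      have := cos_bound m k hm hkpos (mem_range.mp hk)
      linarith
  have hsumle := Finset.sum_le_sum key
  rw [← mul_sum, P1, P2] at hsumle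
  have hmR : (0:ℝ) < m := by positivity
  have h2 : (m:ℝ) * ((2 - 2 * Real.cos (2 * Real.pi / m)) * ∑ t ∈ range m, Complex.normSq (d t))
      ≤ (m:ℝ) * ∑ t ∈ range m, Complex.normSq (d (t + 1) - d t) := by
    nlinarith [hsumle]
  exact le_of_mul_le_mul_left h2 hmR

lemma path_gap (n : ℕ) (hn : 2 ≤ n) (c : ℕ → ℂ) (hsum : ∑ t ∈ range n, c t = 0) :
    (1 - Real.cos (Real.pi / n)) * ∑ t ∈ range n, Complex.normSq (c t)
      ≤ ∑ t ∈ range (n - 1), Complex.normSq (c (t + 1) - c t) := by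
  set d : ℕ → ℂ := fun t =>
    if t % (2 * n) < n then c (t % (2 * n)) else c (2 * n - 1 - t % (2 * n)) with hd
  have hn0 : 0 < n := by omega
  have hdval1 : ∀ t, t < n → d t = c t := by
    intro t ht
    have h1 : t % (2 * n) = t := Nat.mod_eq_of_lt (by omega)
    simp only [hd, h1, if_pos ht]
  have hdval2 : ∀ j, j < n → d (n + j) = c (n - 1 - j) := by
    intro j hj
    have h1 : (n + j) % (2 * n) = n + j := Nat.mod_eq_of_lt (by omega)
    have h2 : ¬ (n + j < n) := by omega
    have h3 : 2 * n - 1 - (n + j) = n - 1 - j := by omega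
    simp only [hd, h1, if_neg h2, h3]
  have hper : d (2 * n) = d 0 := by
    have h1 : (2 * n) % (2 * n) = 0 := Nat.mod_self _
    have h2 : (0:ℕ) % (2 * n) = 0 := Nat.zero_mod _
    simp only [hd, h1, h2, if_pos hn0]
  have hsplit : ∀ f : ℕ → ℝ, ∑ t ∈ range (2 * n), f t
      = ∑ t ∈ range n, f t + ∑ j ∈ range n, f (n + j) := by
    intro f
    rw [two_mul]
    exact Finset.sum_range_add f n n
  have hsplitC : ∀ f : ℕ → ℂ, ∑ t ∈ range (2 * n), f t
      = ∑ t ∈ range n, f t + ∑ j ∈ range n, f (n + j) := by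
    intro f
    rw [two_mul]
    exact Finset.sum_range_add f n n
  have hdsum : ∑ t ∈ range (2 * n), d t = 0 := by
    rw [hsplitC d]
    have e1 : ∑ t ∈ range n, d t = ∑ t ∈ range n, c t :=
      sum_congr rfl fun t ht => hdval1 t (mem_range.mp ht)
    have e2 : ∑ j ∈ range n, d (n + j) = ∑ t ∈ range n, c t := by
      rw [sum_congr rfl fun j hj => hdval2 j (mem_range.mp hj)]
      exact Finset.sum_range_reflect c n
    rw [e1, e2, hsum]
    ring
  have hmain := cyclic_gap (2 * n) (by omega) d hper hdsum
  have hcosEq : (2 * Real.pi / (2 * n) : ℝ) = Real.pi / n := by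
    have : (n:ℝ) ≠ 0 := by positivity
    field_simp
  push_cast at hmain
  rw [hcosEq] at hmain
  have hNorm : ∑ t ∈ range (2 * n), Complex.normSq (d t)
      = 2 * ∑ t ∈ range n, Complex.normSq (c t) := by
    rw [hsplit]
    have e1 : ∑ t ∈ range n, Complex.normSq (d t) = ∑ t ∈ range n, Complex.normSq (c t) :=
      sum_congr rfl fun t ht => by rw [hdval1 t (mem_range.mp ht)]
    have e2 : ∑ j ∈ range n, Complex.normSq (d (n + j))
        = ∑ t ∈ range n, Complex.normSq (c t) := by
      rw [sum_congr rfl fun j hj => by rw [hdval2 j (mem_range.mp hj)]]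
      exact Finset.sum_range_reflect (fun t => Complex.normSq (c t)) n
    rw [e1, e2]
    ring
  have hDiff : ∑ t ∈ range (2 * n), Complex.normSq (d (t + 1) - d t)
      = 2 * ∑ t ∈ range (n - 1), Complex.normSq (c (t + 1) - c t) := by
    rw [hsplit]
    have e1 : ∑ t ∈ range n, Complex.normSq (d (t + 1) - d t)
        = ∑ t ∈ range (n - 1), Complex.normSq (c (t + 1) - c t) := by
      obtain ⟨n', rfl⟩ : ∃ n', n = n' + 1 := ⟨n - 1, by omega⟩
      rw [Finset.sum_range_succ]
      have hlast : d (n' + 1) = d n' := by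
        rw [hdval1 n' (by omega)]
        have h0 := hdval2 0 (by omega)
        rw [Nat.add_zero] at h0
        rw [h0]
        norm_num
      rw [hlast, sub_self, Complex.normSq_zero, add_zero, Nat.add_sub_cancel]
      exact sum_congr rfl fun t ht => by
        rw [hdval1 (t + 1) (by have := mem_range.mp ht; omega),
            hdval1 t (by have := mem_range.mp ht; omega)]
    have e2 : ∑ j ∈ range n, Complex.normSq (d (n + j + 1) - d (n + j))
        = ∑ t ∈ range (n - 1), Complex.normSq (c (t + 1) - c t) := by
      obtain ⟨n', rfl⟩ : ∃ n', n = n' + 1 := ⟨n - 1, by omega⟩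
      rw [Finset.sum_range_succ]
      have hlast : d (n' + 1 + n' + 1) = d (n' + 1 + n') := by
        have h1 : n' + 1 + n' + 1 = 2 * (n' + 1) := by omega
        have h2 := hdval2 n' (by omega)
        rw [h1, hper, hdval1 0 (by omega), h2]
        congr 1
        omega
      rw [hlast]
      simp only [sub_self, Complex.normSq_zero, add_zero, Nat.add_sub_cancel]
      have step : ∀ j ∈ range n', Complex.normSq (d (n' + 1 + j + 1) - d (n' + 1 + j))
          = Complex.normSq (c (n' - 1 - j + 1) - c (n' - 1 - j)) := by
        intro j hj
        have hjlt := mem_range.mp hj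
        have ha : n' + 1 + j + 1 = n' + 1 + (j + 1) := by omega
        rw [ha, hdval2 (j+1) (by omega), hdval2 j (by omega)]
        have h1 : n' + 1 - 1 - (j + 1) = n' - 1 - j := by omega
        have h2 : n' + 1 - 1 - j = n' - 1 - j + 1 := by omega
        rw [h1, h2, ← Complex.normSq_neg]
        congr 1
        ring
      rw [sum_congr rfl step]
      exact Finset.sum_range_reflect (fun t => Complex.normSq (c (t + 1) - c t)) n'
    rw [e1, e2]
    ring
  rw [hNorm, hDiff] at hmain
  have hB : (0:ℝ) ≤ ∑ t ∈ range (n - 1), Complex.normSq (c (t + 1) - c t) :=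
    Finset.sum_nonneg fun t _ => Complex.normSq_nonneg _
  nlinarith [hmain]

lemma gap_numeric (n : ℕ) (hn : 2 ≤ n) :
    1 / (2 * (n:ℝ) ^ 2) ≤ 1 - Real.cos (Real.pi / n) := by
  have hpi := Real.pi_pos
  have hpilt : Real.pi < 3.15 := by
    have := Real.pi_lt_d2
    linarith
  have hpigt : 3 < Real.pi := by
    have := Real.pi_gt_three
    linarith
  have hnR : (2:ℝ) ≤ n := by exact_mod_cast hn
  have hnpos : (0:ℝ) < n := by linarith
  set x := Real.pi / (2 * n) with hx
  have hx0 : 0 < x := by positivity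
  have hx1 : x ≤ 1 := by
    rw [hx, div_le_one (by positivity)]
    nlinarith
  have hsin : x - x ^ 3 / 4 < Real.sin x := by
    have := Real.sin_gt_sub_cube hx0
    linarith [pow_pos hx0 3]
  have hhalf : Real.sin (Real.pi / n / 2) ^ 2 = (1 - Real.cos (Real.pi / n)) / 2 := by
    have habs := Real.abs_sin_half (Real.pi / n)
    have h1 : Real.sin (Real.pi / n / 2) ^ 2 = |Real.sin (Real.pi / n / 2)| ^ 2 := (_root_.sq_abs _).symm
    rw [h1, habs, Real.sq_sqrt]
    have : Real.cos (Real.pi / ↑n) ≤ 1 := Real.cos_le_one _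
    linarith
  have hxeq : Real.pi / n / 2 = x := by
    rw [hx]
    ring
  rw [hxeq] at hhalf
  -- sin x > x - x^3/4 ≥ x/2 ≥ 3/(4n) > 1/(2n)
  have hxlb : Real.pi / (2 * n) = x := rfl
  have hsinlb : 1 / (2 * n) < Real.sin x := by
    have h2 : x - x ^ 3 / 4 ≥ x / 2 := by
      nlinarith [mul_nonneg (mul_nonneg hx0.le hx0.le) (sub_nonneg.mpr hx1),
        mul_nonneg hx0.le (sub_nonneg.mpr hx1)]
    have hx2 : x / 2 = Real.pi / (4 * n) := by rw [hx]; ring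
    have h3 : x / 2 ≥ 3 / (4 * n) := by
      rw [hx2]
      gcongr
    have h4 : (3:ℝ) / (4 * n) > 1 / (2 * n) := by
      rw [gt_iff_lt, div_lt_div_iff₀ (by positivity) (by positivity)]
      nlinarith
    linarith
  have hsin0 : 0 < Real.sin x := by
    have : (0:ℝ) < 1 / (2 * n) := by positivity
    linarith
  have h5 : (1 / (2 * n) : ℝ) ^ 2 < Real.sin x ^ 2 := by
    apply pow_lt_pow_left₀ hsinlb (by positivity)
    norm_num
  have h6 : (1 / (2 * n) : ℝ) ^ 2 = 1 / (4 * n ^ 2) := by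
    field_simp
    ring
  have h7 : 1 - Real.cos (Real.pi / n) = 2 * Real.sin x ^ 2 := by linarith
  rw [h7]
  rw [h6] at h5
  rw [div_le_iff₀ (by positivity)]
  rw [div_lt_iff₀ (by positivity)] at h5
  nlinarith


open Matrix
open scoped Kronecker


variable {d K : ℕ}

noncomputable def eDelta (K : ℕ) (t : Fin (K + 1)) : Fin (K + 1) → ℂ :=
  fun j => if j = t then 1 else 0

lemma gamma_eq (U : Fin K → Matrix (Fin d) (Fin d) ℂ) (φ : Fin d → ℂ) (t : Fin (K + 1)) :
    gammaVec d K U φ t = fun p => (prodU d K U t.val *ᵥ φ) p.1 * eDelta K t p.2 := rfl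

lemma prodU_unitary (U : Fin K → Matrix (Fin d) (Fin d) ℂ)
    (hU : ∀ i, U i ∈ Matrix.unitaryGroup (Fin d) ℂ) (t : ℕ) :
    (prodU d K U t)ᴴ * prodU d K U t = 1 := by
  induction t with
  | zero => simp [prodU]
  | succ t ih =>
    rw [prodU]
    have hA : (if h : t < K then U ⟨t, h⟩ else 1)ᴴ * (if h : t < K then U ⟨t, h⟩ else 1)
        = 1 := by
      split_ifs with h
      · have := Matrix.mem_unitaryGroup_iff'.mp (hU ⟨t, h⟩)
        rwa [Matrix.star_eq_conjTranspose] at this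
      · simp
    rw [Matrix.conjTranspose_mul, Matrix.mul_assoc,
      ← Matrix.mul_assoc (if h : t < K then U ⟨t, h⟩ else 1)ᴴ, hA, Matrix.one_mul, ih]

lemma unit_inner {A : Matrix (Fin d) (Fin d) ℂ} (hA : Aᴴ * A = 1) (x y : Fin d → ℂ) :
    star (A *ᵥ x) ⬝ᵥ (A *ᵥ y) = star x ⬝ᵥ y := by
  rw [Matrix.star_mulVec, Matrix.dotProduct_mulVec, Matrix.vecMul_vecMul, hA,
    Matrix.vecMul_one]

lemma dot_tensor (x x' : Fin d → ℂ) (y y' : Fin (K + 1) → ℂ) :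
    star (fun p : Fin d × Fin (K + 1) => x p.1 * y p.2) ⬝ᵥ (fun p => x' p.1 * y' p.2)
      = (star x ⬝ᵥ x') * (star y ⬝ᵥ y') := by
  simp only [dotProduct, Pi.star_apply, Fintype.sum_prod_type, Finset.sum_mul_sum]
  refine Finset.sum_congr rfl fun i _ => Finset.sum_congr rfl fun j _ => ?_
  simp only [star_mul']
  ring

lemma eDelta_dot (s t : Fin (K + 1)) :
    star (eDelta K s) ⬝ᵥ eDelta K t = if s = t then 1 else 0 := by
  simp only [dotProduct, eDelta, Pi.star_apply]
  by_cases h : s = t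
  · subst h
    simp
  · rw [if_neg h]
    apply Finset.sum_eq_zero
    intro j _
    by_cases h1 : j = s <;> by_cases h2 : j = t <;> simp_all

lemma kron_mulVec (A : Matrix (Fin d) (Fin d) ℂ) (B : Matrix (Fin (K + 1)) (Fin (K + 1)) ℂ)
    (x : Fin d → ℂ) (y : Fin (K + 1) → ℂ) :
    (A ⊗ₖ B) *ᵥ (fun p => x p.1 * y p.2) = fun p => (A *ᵥ x) p.1 * (B *ᵥ y) p.2 := by
  funext p
  simp only [Matrix.mulVec, dotProduct, Fintype.sum_prod_type, Matrix.kroneckerMap_apply,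
    Finset.sum_mul_sum]
  refine Finset.sum_congr rfl fun i _ => Finset.sum_congr rfl fun j _ => ?_
  ring

lemma clock_mulVec (a b t : Fin (K + 1)) :
    clockE K a b *ᵥ eDelta K t = fun j => if j = a ∧ b = t then 1 else 0 := by
  funext j
  rw [clockE, Matrix.single_mulVec]
  simp only [Function.update_apply, eDelta, Pi.zero_apply, one_mul]
  by_cases h1 : j = a <;> by_cases h2 : b = t <;> simp [h1, h2]

lemma Hterm_gamma (U : Fin K → Matrix (Fin d) (Fin d) ℂ) (φ : Fin d → ℂ)
    (hU : ∀ i, U i ∈ Matrix.unitaryGroup (Fin d) ℂ) (r : Fin K) (t : Fin (K + 1)) :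
    Hterm d K U r *ᵥ gammaVec d K U φ t =
      if t = r.castSucc then gammaVec d K U φ r.castSucc - gammaVec d K U φ r.succ
      else if t = r.succ then gammaVec d K U φ r.succ - gammaVec d K U φ r.castSucc
      else 0 := by
  have hne : (r.castSucc : Fin (K + 1)) ≠ r.succ := (Fin.castSucc_lt_succ (i := r)).ne
  have hUr : (U r)ᴴ * U r = 1 := by
    have := Matrix.mem_unitaryGroup_iff'.mp (hU r)
    rwa [Matrix.star_eq_conjTranspose] at this
  have hsucc : prodU d K U (r.val + 1) *ᵥ φ = U r *ᵥ (prodU d K U r.val *ᵥ φ) := by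
    rw [Matrix.mulVec_mulVec]
    show prodU d K U (r.val + 1) *ᵥ φ = (U r * prodU d K U r.val) *ᵥ φ
    congr 1
    rw [prodU, dif_pos r.isLt]
  have hpred : (U r)ᴴ *ᵥ (prodU d K U (r.val + 1) *ᵥ φ) = prodU d K U r.val *ᵥ φ := by
    rw [hsucc, Matrix.mulVec_mulVec, hUr, Matrix.one_mulVec]
  rw [gamma_eq, Hterm, Matrix.kronecker_add, Matrix.sub_mulVec, Matrix.sub_mulVec,
    Matrix.add_mulVec, kron_mulVec, kron_mulVec, kron_mulVec, kron_mulVec,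
    Matrix.one_mulVec, clock_mulVec, clock_mulVec, clock_mulVec, clock_mulVec]
  by_cases h1 : t = r.castSucc
  · subst h1
    rw [if_pos rfl]
    funext p
    simp only [Pi.sub_apply, Pi.add_apply, gamma_eq, eDelta, Fin.coe_castSucc, Fin.val_succ,
      hsucc, hne, hne.symm]
    by_cases hp : p.2 = r.castSucc <;> by_cases hq : p.2 = r.succ <;>
      simp_all <;> ring
  · by_cases h2 : t = r.succ
    · subst h2
      rw [if_neg h1, if_pos rfl]
      funext p
      simp only [Pi.sub_apply, Pi.add_apply, gamma_eq, eDelta, Fin.coe_castSucc, Fin.val_succ,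
        hpred, hne, hne.symm, h1]
      by_cases hp : p.2 = r.castSucc <;> by_cases hq : p.2 = r.succ <;>
        simp_all <;> ring
    · rw [if_neg h1, if_neg h2]
      funext p
      have h1' : r.castSucc ≠ t := fun h => h1 h.symm
      have h2' : r.succ ≠ t := fun h => h2 h.symm
      simp [h1', h2']

lemma psi_norm (U : Fin K → Matrix (Fin d) (Fin d) ℂ) (φ : Fin d → ℂ)
    (hU : ∀ i, U i ∈ Matrix.unitaryGroup (Fin d) ℂ) (hφ : star φ ⬝ᵥ φ = 1) (t : ℕ) :
    star (prodU d K U t *ᵥ φ) ⬝ᵥ (prodU d K U t *ᵥ φ) = 1 := by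
  rw [unit_inner (prodU_unitary U hU t), hφ]

lemma gamma_gram (U : Fin K → Matrix (Fin d) (Fin d) ℂ) (φ : Fin d → ℂ)
    (hU : ∀ i, U i ∈ Matrix.unitaryGroup (Fin d) ℂ) (hφ : star φ ⬝ᵥ φ = 1)
    (s t : Fin (K + 1)) :
    star (gammaVec d K U φ s) ⬝ᵥ gammaVec d K U φ t = if s = t then 1 else 0 := by
  rw [gamma_eq, gamma_eq, dot_tensor, eDelta_dot]
  by_cases h : s = t
  · subst h
    simp [psi_norm U φ hU hφ]
  · simp [h]

lemma sum_dotProduct' {ι κ : Type*} [Fintype ι] (s : Finset κ) (f : κ → ι → ℂ) (w : ι → ℂ) :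
    (∑ t ∈ s, f t) ⬝ᵥ w = ∑ t ∈ s, f t ⬝ᵥ w := by
  simp only [dotProduct, Finset.sum_apply, Finset.sum_mul]
  exact Finset.sum_comm

lemma dotProduct_sum' {ι κ : Type*} [Fintype ι] (s : Finset κ) (w : ι → ℂ) (f : κ → ι → ℂ) :
    w ⬝ᵥ (∑ t ∈ s, f t) = ∑ t ∈ s, w ⬝ᵥ f t := by
  simp only [dotProduct, Finset.sum_apply, Finset.mul_sum]
  exact Finset.sum_comm

lemma sum_mulVec' {ι κ : Type*} [Fintype ι] (s : Finset κ) (M : κ → Matrix ι ι ℂ) (w : ι → ℂ) :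
    (∑ r ∈ s, M r) *ᵥ w = ∑ r ∈ s, M r *ᵥ w := by
  funext i
  simp only [Matrix.mulVec, dotProduct, Finset.sum_apply, Matrix.sum_apply,
    Finset.sum_mul]
  exact Finset.sum_comm

lemma mulVec_sum' {ι κ : Type*} [Fintype ι] (s : Finset κ) (M : Matrix ι ι ℂ) (f : κ → ι → ℂ) :
    M *ᵥ (∑ r ∈ s, f r) = ∑ r ∈ s, M *ᵥ f r := by
  funext i
  simp only [Matrix.mulVec, dotProduct, Finset.sum_apply, Finset.mul_sum]
  exact Finset.sum_comm


end HpropAux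

/-- Spectral gap above the history state: if `‖φ‖ = 1` and `v` lies in the span of
`{γ₀, …, γ_K}` and is orthogonal to the history state `Σ_t γ_t`, then
`⟨v, H_prop v⟩ ≥ (1 − cos(π/(K+1)))·‖v‖² ≥ ‖v‖²/(2(K+1)²)`. -/
theorem Hprop_gap (d K : ℕ) (hd : 1 ≤ d) (hK : 1 ≤ K)
    (U : Fin K → Matrix (Fin d) (Fin d) ℂ)
    (hU : ∀ i, U i ∈ Matrix.unitaryGroup (Fin d) ℂ)
    (φ : Fin d → ℂ) (hφ : star φ ⬝ᵥ φ = 1)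
    (v : Fin d × Fin (K + 1) → ℂ)
    (hv : v ∈ Submodule.span ℂ (Set.range (gammaVec d K U φ)))
    (horth : star (∑ t : Fin (K + 1), gammaVec d K U φ t) ⬝ᵥ v = 0) :
    (1 - Real.cos (Real.pi / ((K : ℝ) + 1))) * (star v ⬝ᵥ v).re
        ≤ (star v ⬝ᵥ (Hprop d K U *ᵥ v)).re ∧
      (star v ⬝ᵥ v).re / (2 * ((K : ℝ) + 1) ^ 2) ≤ (star v ⬝ᵥ (Hprop d K U *ᵥ v)).re := by
  classical
  obtain ⟨c, hc⟩ := (Submodule.mem_span_range_iff_exists_fun ℂ).mp hv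
  set γ := gammaVec d K U φ with hγ
  have hstarv : star v = ∑ s : Fin (K + 1), star (c s) • star (γ s) := by
    rw [← hc, star_sum]
    exact Finset.sum_congr rfl fun s _ => star_smul (c s) (γ s)
  have hA : ∀ t, star v ⬝ᵥ γ t = star (c t) := by
    intro t
    rw [hstarv, HpropAux.sum_dotProduct']
    rw [Finset.sum_congr rfl fun s _ => by
      rw [smul_dotProduct, hγ, HpropAux.gamma_gram U φ hU hφ s t]]
    simp [smul_eq_mul]
  have hB : ∀ t, star (γ t) ⬝ᵥ v = c t := by
    intro t
    rw [← hc, HpropAux.dotProduct_sum']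
    rw [Finset.sum_congr rfl fun s _ => by
      rw [dotProduct_smul, hγ, HpropAux.gamma_gram U φ hU hφ t s]]
    simp [smul_eq_mul]
  have hsum0 : ∑ t : Fin (K + 1), c t = 0 := by
    have h0 := horth
    rw [star_sum, HpropAux.sum_dotProduct'] at h0
    rw [Finset.sum_congr rfl fun t _ => hB t] at h0
    exact h0
  have hN : star v ⬝ᵥ v = ∑ t : Fin (K + 1), (Complex.normSq (c t) : ℂ) := by
    nth_rewrite 2 [← hc]
    rw [HpropAux.dotProduct_sum']
    refine Finset.sum_congr rfl fun t _ => ?_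
    rw [dotProduct_smul, hA t, smul_eq_mul, mul_comm, ← starRingEnd_apply,
      ← Complex.normSq_eq_conj_mul_self]
  have hQ : star v ⬝ᵥ (Hprop d K U *ᵥ v)
      = ∑ r : Fin K, (Complex.normSq (c r.castSucc - c r.succ) : ℂ) := by
    rw [Hprop, HpropAux.sum_mulVec', HpropAux.dotProduct_sum']
    refine Finset.sum_congr rfl fun r _ => ?_
    have hne : (r.castSucc : Fin (K + 1)) ≠ r.succ := (Fin.castSucc_lt_succ (i := r)).ne
    have hterm : Hterm d K U r *ᵥ v
        = (c r.castSucc - c r.succ) • (γ r.castSucc - γ r.succ) := by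
      conv_lhs => rw [← hc]
      rw [HpropAux.mulVec_sum']
      rw [Finset.sum_congr rfl fun t _ => by
        rw [Matrix.mulVec_smul, hγ, HpropAux.Hterm_gamma U φ hU r t]]
      have split : ∀ t : Fin (K + 1),
          (c t • if t = r.castSucc then gammaVec d K U φ r.castSucc - gammaVec d K U φ r.succ
            else if t = r.succ then gammaVec d K U φ r.succ - gammaVec d K U φ r.castSucc
            else 0)
          = (if t = r.castSucc then c t • (gammaVec d K U φ r.castSucc - gammaVec d K U φ r.succ) else 0)
            + (if t = r.succ then c t • (gammaVec d K U φ r.succ - gammaVec d K U φ r.castSucc) else 0) := by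
        intro t
        split_ifs with h1 h2 <;> simp_all
      rw [Finset.sum_congr rfl fun t _ => split t, Finset.sum_add_distrib,
        Finset.sum_ite_eq' Finset.univ r.castSucc
          (fun t => c t • (gammaVec d K U φ r.castSucc - gammaVec d K U φ r.succ)),
        Finset.sum_ite_eq' Finset.univ r.succ
          (fun t => c t • (gammaVec d K U φ r.succ - gammaVec d K U φ r.castSucc))]
      simp only [Finset.mem_univ, if_pos, hγ]
      module
    rw [hterm, dotProduct_smul, smul_eq_mul, dotProduct_sub, hA, hA, ← star_sub]
    rw [mul_comm, ← starRingEnd_apply, ← Complex.normSq_eq_conj_mul_self]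
  -- pass to real parts
  have hQre : (star v ⬝ᵥ (Hprop d K U *ᵥ v)).re
      = ∑ r : Fin K, Complex.normSq (c r.castSucc - c r.succ) := by
    rw [hQ, Complex.re_sum]
    exact Finset.sum_congr rfl fun r _ => Complex.ofReal_re _
  have hNre : (star v ⬝ᵥ v).re = ∑ t : Fin (K + 1), Complex.normSq (c t) := by
    rw [hN, Complex.re_sum]
    exact Finset.sum_congr rfl fun t _ => Complex.ofReal_re _
  -- the scalar inequality
  set cc : ℕ → ℂ := fun t => if h : t < K + 1 then c ⟨t, h⟩ else 0 with hcc
  have hccval : ∀ i : Fin (K + 1), cc i.val = c i := by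
    intro i
    simp only [hcc, i.isLt, dif_pos, Fin.eta]
  have hccsum : ∑ t ∈ Finset.range (K + 1), cc t = 0 := by
    rw [← Fin.sum_univ_eq_sum_range (fun t => cc t) (K + 1)]
    rw [Finset.sum_congr rfl fun i _ => hccval i]
    exact hsum0
  have hgap := HpropAux.path_gap (K + 1) (by omega) cc hccsum
  have e1 : ∑ t ∈ Finset.range (K + 1), Complex.normSq (cc t) = (star v ⬝ᵥ v).re := by
    rw [hNre, ← Fin.sum_univ_eq_sum_range (fun t => Complex.normSq (cc t)) (K + 1)]
    exact Finset.sum_congr rfl fun i _ => by rw [hccval i]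
  have e2 : ∑ t ∈ Finset.range (K + 1 - 1), Complex.normSq (cc (t + 1) - cc t)
      = (star v ⬝ᵥ (Hprop d K U *ᵥ v)).re := by
    rw [hQre]
    have hK1 : K + 1 - 1 = K := rfl
    rw [hK1, ← Fin.sum_univ_eq_sum_range (fun t => Complex.normSq (cc (t + 1) - cc t)) K]
    refine Finset.sum_congr rfl fun r _ => ?_
    have ha : cc (r.val + 1) = c r.succ := by
      have h1 : r.val + 1 < K + 1 := by omega
      simp only [hcc, h1, dif_pos]
      congr 1
    have hb : cc r.val = c r.castSucc := by
      have h1 : r.val < K + 1 := by omega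
      simp only [hcc, h1, dif_pos]
      congr 1
    rw [ha, hb, ← Complex.normSq_neg]
    congr 1
    ring
  rw [e1, e2] at hgap
  have hcast : ((K + 1 : ℕ) : ℝ) = (K : ℝ) + 1 := by push_cast; ring
  rw [hcast] at hgap
  have hNnonneg : 0 ≤ (star v ⬝ᵥ v).re := by
    rw [hNre]
    exact Finset.sum_nonneg fun t _ => Complex.normSq_nonneg _
  constructor
  · exact hgap
  · have hnum := HpropAux.gap_numeric (K + 1) (by omega)
    rw [hcast] at hnum
    have h1 : (star v ⬝ᵥ v).re / (2 * ((K : ℝ) + 1) ^ 2)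
        = (star v ⬝ᵥ v).re * (1 / (2 * ((K : ℝ) + 1) ^ 2)) := by ring
    have hpos : (0:ℝ) < 2 * ((K : ℝ) + 1) ^ 2 := by positivity
    nlinarith [mul_le_mul_of_nonneg_left hnum hNnonneg]
end
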